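/- If an implementation DFSM S passes a test suite TS containing V.⋃_{i=0}^{m−n+1} Σ_I^i under the equality pass criterion against M, and for every pair of state-cover traces α, β ∈ V reaching distinct states of the prime reference machine M there is a distinguishing trace γ with α.γ, β.γ ∈ TS, then V.⋃_{i=0}^{m−n} Σ_I^i reaches all states of S, provided S is minimal with at most m states. -/
import Mathlib


def dAfter {Q I : Type*} (δ : Q → I → Q) : Q → List I → Q
  | q, [] => q
  | q, x :: xs => dAfter δ (δ q x) xs

def oOut {Q I O : Type*} (δ : Q → I → Q) (ω : Q → I → O) : Q → List I → List O
  | _, [] => []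
  | q, x :: xs => ω q x :: oOut δ ω (δ q x) xs

theorem dAfter_append {Q I : Type*} (δ : Q → I → Q) (q : Q) (xs ys : List I) :
    dAfter δ q (xs ++ ys) = dAfter δ (dAfter δ q xs) ys := by
  induction xs generalizing q with
  | nil => rfl
  | cons a t ih => simp [dAfter, ih]

theorem oOut_append {Q I O : Type*} (δ : Q → I → Q) (ω : Q → I → O) (q : Q) (xs ys : List I) :
    oOut δ ω q (xs ++ ys) = oOut δ ω q xs ++ oOut δ ω (dAfter δ q xs) ys := by
  induction xs generalizing q with
  | nil => rfl
  | cons a t ih => simp [oOut, dAfter, ih]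

theorem oOut_length {Q I O : Type*} (δ : Q → I → Q) (ω : Q → I → O) (q : Q) (xs : List I) :
    (oOut δ ω q xs).length = xs.length := by
  induction xs generalizing q with
  | nil => rfl
  | cons a t ih => simp [oOut, ih]

/-- if (minimal, at most m states) S passes a test suite TS containing
V.⋃_{i=0..m-n+1} Σ_I^i under the equality pass criterion, and for every pair of state-cover
traces reaching distinct states of (prime) M there is a distinguishing trace whose
extensions are in TS, then V.⋃_{i=0..m-n} Σ_I^i reaches all states of S. -/
theorem stmt_16 {Q S I O : Type*} [Fintype Q] [Fintype S]
    (δM : Q → I → Q) (ωM : Q → I → O) (q0 : Q)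
    -- M prime with n = Fintype.card Q states
    (hMreach : ∀ q : Q, ∃ π : List I, dAfter δM q0 π = q)
    (hMdist : ∀ q q' : Q, (∀ xs : List I, oOut δM ωM q xs = oOut δM ωM q' xs) → q = q')
    (m : ℕ) (hmn : Fintype.card Q ≤ m)
    -- S minimal with at most m states
    (δS : S → I → S) (ωS : S → I → O) (s0 : S)
    (hSreach : ∀ s : S, ∃ π : List I, dAfter δS s0 π = s)
    (hSdist : ∀ s s' : S, (∀ xs : List I, oOut δS ωS s xs = oOut δS ωS s' xs) → s = s')
    (hScard : Fintype.card S ≤ m)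
    -- state cover V of M containing the empty trace
    (V : Set (List I)) (hε : ([] : List I) ∈ V)
    (hcover : ∀ q : Q, ∃ v ∈ V, dAfter δM q0 v = q)
    (TS : Set (List I))
    (hTS1 : ∀ v ∈ V, ∀ w : List I,
      w.length ≤ m - Fintype.card Q + 1 → v ++ w ∈ TS)
    (hTS2 : ∀ α ∈ V, ∀ β ∈ V, dAfter δM q0 α ≠ dAfter δM q0 β →
      ∃ γ : List I, oOut δM ωM (dAfter δM q0 α) γ ≠ oOut δM ωM (dAfter δM q0 β) γ ∧
        α ++ γ ∈ TS ∧ β ++ γ ∈ TS)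
    (hpass : ∀ xs ∈ TS, oOut δS ωS s0 xs = oOut δM ωM q0 xs) :
    ∀ s : S, ∃ v ∈ V, ∃ w : List I,
      w.length ≤ m - Fintype.card Q ∧ dAfter δS s0 (v ++ w) = s := by
  classical
  set n := Fintype.card Q with hn
  -- the reachable sets
  set A : ℕ → Set S := fun k =>
    {s | ∃ v ∈ V, ∃ w : List I, w.length ≤ k ∧ dAfter δS s0 (v ++ w) = s} with hA
  have hmono : ∀ {k j : ℕ}, k ≤ j → A k ⊆ A j := by
    rintro k j hkj s ⟨v, hv, w, hw, rfl⟩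
    exact ⟨v, hv, w, hw.trans hkj, rfl⟩
  have hs0 : ∀ k, s0 ∈ A k := fun k => ⟨[], hε, [], Nat.zero_le _, rfl⟩
  -- choose cover traces
  choose f hfV hfM using hcover
  -- key: for traces with both extensions passing, S-states distinct when M-states distinct
  have hpass_split : ∀ v ∈ V, ∀ γ : List I, v ++ γ ∈ TS →
      oOut δS ωS (dAfter δS s0 v) γ = oOut δM ωM (dAfter δM q0 v) γ := by
    intro v hv γ hts
    have h := hpass _ hts
    rw [oOut_append, oOut_append] at h
    have hlen : (oOut δS ωS s0 v).length = (oOut δM ωM q0 v).length := by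
      rw [oOut_length, oOut_length]
    exact (List.append_inj h hlen).2
  have hg : Function.Injective (fun q : Q => dAfter δS s0 (f q)) := by
    intro q q' h
    by_contra hne
    have hMne : dAfter δM q0 (f q) ≠ dAfter δM q0 (f q') := by
      rw [hfM, hfM]; exact hne
    obtain ⟨γ, hγ, h1, h2⟩ := hTS2 _ (hfV q) _ (hfV q') hMne
    have e1 := hpass_split _ (hfV q) γ h1
    have e2 := hpass_split _ (hfV q') γ h2
    simp only at h
    apply hγ
    rw [← e1, ← e2, h]
  have hA0 : n ≤ (A 0).ncard := by
    have hsub : Set.range (fun q : Q => dAfter δS s0 (f q)) ⊆ A 0 := by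
      rintro s ⟨q, rfl⟩
      exact ⟨f q, hfV q, [], le_refl _, by simp⟩
    calc n = (Set.range (fun q : Q => dAfter δS s0 (f q))).ncard := by
            rw [← Set.image_univ, Set.ncard_image_of_injective _ hg, Set.ncard_univ,
              Nat.card_eq_fintype_card]
      _ ≤ (A 0).ncard := Set.ncard_le_ncard hsub (Set.toFinite _)
  -- closure: if A (k+1) ⊆ A k then A k = univ
  have hclosed : ∀ k, A (k + 1) ⊆ A k → A k = Set.univ := by
    intro k hk
    apply Set.eq_univ_of_forall
    intro s
    obtain ⟨π, rfl⟩ := hSreach s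
    induction π using List.reverseRecOn with
    | nil => exact hs0 k
    | append_singleton xs x ih =>
      obtain ⟨v, hv, w, hw, he⟩ := ih
      apply hk
      refine ⟨v, hv, w ++ [x], by simp; omega, ?_⟩
      rw [← List.append_assoc, dAfter_append, he, ← dAfter_append]
  -- main induction
  have hmain : ∀ k, A k = Set.univ ∨ n + k ≤ (A k).ncard := by
    intro k
    induction k with
    | zero => exact Or.inr (by simpa using hA0)
    | succ k ih =>
      rcases ih with h | h
      · left
        exact Set.eq_univ_of_univ_subset (h ▸ hmono (Nat.le_succ k))
      · by_cases he : A (k + 1) ⊆ A k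
        · left
          exact Set.eq_univ_of_univ_subset ((hclosed k he) ▸ hmono (Nat.le_succ k))
        · right
          have hss : A k ⊂ A (k + 1) := ⟨hmono (Nat.le_succ k), he⟩
          have := Set.ncard_lt_ncard hss (Set.toFinite _)
          omega
  have hfin : A (m - n) = Set.univ := by
    rcases hmain (m - n) with h | h
    · exact h
    · refine Set.eq_of_subset_of_ncard_le (Set.subset_univ _) ?_ (Set.toFinite _)
      rw [Set.ncard_univ, Nat.card_eq_fintype_card]
      omega
  intro s
  have : s ∈ A (m - n) := hfin ▸ Set.mem_univ s
  exact this
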